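/- Fix n ≥ 1, B ∈ GL_n(ℝ), a positive diagonal matrix D, and let W, Δ_y and M_y be as in the context. Then for every y ∈ ℝ^{2n}, the n×n matrix M_y W = (I − Δ_y − Δ_y D) B is invertible. -/
import Mathlib


open Matrix
open scoped NNReal

noncomputable section

/-- The squared ℓ² norm of a vector. -/
def l2sq {ι : Type*} [Fintype ι] (v : ι → ℝ) : ℝ := ∑ j, (v j) ^ 2

/-- The ℓ² norm of a vector. -/
def l2norm {ι : Type*} [Fintype ι] (v : ι → ℝ) : ℝ := Real.sqrt (l2sq v)

/-- The matrix `W = [B; -DB]` (`B` stacked on top of `-DB`). -/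
def Wmat {n : ℕ} (B D : Matrix (Fin n) (Fin n) ℝ) : Matrix (Fin n ⊕ Fin n) (Fin n) ℝ :=
  Matrix.of (Sum.elim (fun i j => B i j) (fun i j => -((D * B) i j)))

/-- The injective ReLU layer `R(x) = ReLU(Wx)`. -/
def Rrelu {n : ℕ} (B D : Matrix (Fin n) (Fin n) ℝ) (x : Fin n → ℝ) : (Fin n ⊕ Fin n) → ℝ :=
  fun j => max ((Wmat B D).mulVec x j) 0

/-- `c(y) = max([[I,-I],[-I,I]] y, 0)` componentwise. -/
def cvec {n : ℕ} (y : (Fin n ⊕ Fin n) → ℝ) : (Fin n ⊕ Fin n) → ℝ :=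
  fun j => max ((Matrix.fromBlocks (1 : Matrix (Fin n) (Fin n) ℝ) (-1) (-1) 1).mulVec y j) 0

/-- The diagonal matrix `Δ_y` with `(Δ_y)_{ii} = 1` iff `c(y)_{i+n} > 0`. -/
def Delta {n : ℕ} (y : (Fin n ⊕ Fin n) → ℝ) : Matrix (Fin n) (Fin n) ℝ :=
  Matrix.diagonal (fun i => if 0 < cvec y (Sum.inr i) then (1 : ℝ) else 0)

/-- The matrix `M_y = [(I - Δ_y), Δ_y]` (block concatenation of columns). -/
def Mmat {n : ℕ} (y : (Fin n ⊕ Fin n) → ℝ) : Matrix (Fin n) (Fin n ⊕ Fin n) ℝ :=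
  Matrix.of (fun i => Sum.elim (fun j => (1 - Delta y) i j) (fun j => Delta y i j))

/-- The matrix `M̃_y = [Δ_y, (I - Δ_y)]` (block concatenation of columns). -/
def Mtil {n : ℕ} (y : (Fin n ⊕ Fin n) → ℝ) : Matrix (Fin n) (Fin n ⊕ Fin n) ℝ :=
  Matrix.of (fun i => Sum.elim (fun j => Delta y i j) (fun j => (1 - Delta y) i j))

/-- The layer-wise projection `R†(y) = (M_y W)⁻¹ M_y y`. -/
def Rdag {n : ℕ} (B D : Matrix (Fin n) (Fin n) ℝ) (y : (Fin n ⊕ Fin n) → ℝ) : Fin n → ℝ :=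
  (Mmat y * Wmat B D)⁻¹.mulVec ((Mmat y).mulVec y)

theorem mmat_mul_wmat_isUnit {n : ℕ} (hn : 1 ≤ n)
    (B : Matrix (Fin n) (Fin n) ℝ) (hB : IsUnit B.det)
    (D : Matrix (Fin n) (Fin n) ℝ)
    (hDdiag : ∀ i j, i ≠ j → D i j = 0) (hDpos : ∀ i, 0 < D i i)
    (y : (Fin n ⊕ Fin n) → ℝ) :
    Mmat y * Wmat B D = (1 - Delta y - Delta y * D) * B ∧
      IsUnit (Mmat y * Wmat B D) := by
  have heq : Mmat y * Wmat B D = (1 - Delta y - Delta y * D) * B := by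
    have h2 : Mmat y * Wmat B D = (1 - Delta y) * B + Delta y * (-(D * B)) := by
      ext i j
      simp [Matrix.mul_apply, Mmat, Wmat, Fintype.sum_sum_type]
    rw [h2]
    noncomm_ring
  refine ⟨heq, ?_⟩
  rw [heq]
  have hdiag : (1 : Matrix (Fin n) (Fin n) ℝ) - Delta y - Delta y * D
      = Matrix.diagonal (fun i => 1 - (if 0 < cvec y (Sum.inr i) then (1:ℝ) else 0)
          - (if 0 < cvec y (Sum.inr i) then (1:ℝ) else 0) * D i i) := by
    ext i j
    by_cases h : i = j
    · subst h
      simp [Delta, Matrix.mul_apply, Matrix.diagonal, Finset.sum_ite_eq,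
        Matrix.sub_apply, Matrix.one_apply]
    · simp [Delta, Matrix.mul_apply, Matrix.diagonal, h, Matrix.sub_apply,
        Matrix.one_apply, hDdiag i j h, Finset.sum_ite_eq]
  have hunit : IsUnit ((1 : Matrix (Fin n) (Fin n) ℝ) - Delta y - Delta y * D) := by
    rw [hdiag, Matrix.isUnit_iff_isUnit_det, Matrix.det_diagonal, isUnit_iff_ne_zero]
    apply Finset.prod_ne_zero_iff.mpr
    intro i _
    by_cases h : 0 < cvec y (Sum.inr i)
    · simp only [h, if_true]
      have := (hDpos i).ne'
      intro hc; apply this; linarith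
    · simp [h]
  exact hunit.mul ((Matrix.isUnit_iff_isUnit_det B).mpr hB)
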